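/- Let t ≥ 0 and let G be a simple graph containing no t+2 pairwise vertex-disjoint triangles. Let M be a family of t+1 pairwise vertex-disjoint triangles in G, let D be the induced subgraph of G on the vertices not covered by M, and let 𝓜 be a matching in D. Suppose (x₁,y₁,z₁) and (x₂,y₂,z₂) are two distinct triangles of M such that each of z₁ and z₂ is friendly in G with at least two distinct edges of 𝓜. Then neither x₁ nor y₁ is adjacent in G to both x₂ and y₂. -/

import Mathlib

/-- `G` contains `k` pairwise vertex-disjoint triangles. -/
def HasIndepTriangles {V : Type*} (G : SimpleGraph V) (k : ℕ) : Prop :=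
  ∃ f : Fin k → Fin 3 → V,
    Function.Injective (fun p : Fin k × Fin 3 => f p.1 p.2) ∧
    ∀ i, G.Adj (f i 0) (f i 1) ∧ G.Adj (f i 1) (f i 2) ∧ G.Adj (f i 0) (f i 2)

/-- The vertex `w` is friendly with the edge `e`: it is adjacent to both endpoints. -/
def Friendly {V : Type*} (G : SimpleGraph V) (w : V) (e : Sym2 V) : Prop :=
  ∀ x ∈ e, G.Adj w x

/-- `F` is a matching of the subgraph of `G` induced on `S`. -/
def IsMatchingOn {V : Type*} (G : SimpleGraph V) (S : Set V) (F : Finset (Sym2 V)) : Prop :=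
  (∀ e ∈ F, e ∈ G.edgeSet ∧ ∀ x ∈ e, x ∈ S) ∧
  ((F : Set (Sym2 V)).Pairwise fun e f => ∀ v, v ∈ e → v ∉ f)

lemma slot_adj {V : Type*} (G : SimpleGraph V) {k : ℕ} (f : Fin k → Fin 3 → V)
    (htri : ∀ i, G.Adj (f i 0) (f i 1) ∧ G.Adj (f i 1) (f i 2) ∧ G.Adj (f i 0) (f i 2))
    (i : Fin k) {j j' : Fin 3} (h : j ≠ j') : G.Adj (f i j) (f i j') := by
  obtain ⟨h1, h2, h3⟩ := htri i
  fin_cases j <;> fin_cases j' <;>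
    first
      | exact absurd rfl h
      | exact h1 | exact h2 | exact h3
      | exact h1.symm | exact h2.symm | exact h3.symm

lemma vec4_inj {V : Type*} {a b c d : V} (hab : a ≠ b) (hac : a ≠ c) (had : a ≠ d)
    (hbc : b ≠ c) (hbd : b ≠ d) (hcd : c ≠ d) : Function.Injective ![a, b, c, d] := by
  intro m n h
  fin_cases m <;> fin_cases n <;> simp_all

def tagf (t : ℕ) (i₁ i₂ : Fin (t + 1)) (σ₁ σ₂ : Equiv.Perm (Fin 3)) (j₀ : Fin 3) :
    Fin (t + 2) → Fin 3 → (Fin (t + 1) × Fin 3) ⊕ Fin 4 := fun k j =>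
  if h : (k : ℕ) < t + 1 then
    if (⟨k, h⟩ : Fin (t + 1)) = i₁ then
      if j = 0 then .inl (i₁, σ₁ 2) else if j = 1 then .inr 0 else .inr 1
    else if (⟨k, h⟩ : Fin (t + 1)) = i₂ then
      if j = 0 then .inl (i₂, σ₂ 2) else if j = 1 then .inr 2 else .inr 3
    else .inl (⟨k, h⟩, j)
  else
    if j = 0 then .inl (i₁, σ₁ j₀) else if j = 1 then .inl (i₂, σ₂ 0) else .inl (i₂, σ₂ 1)

set_option maxHeartbeats 4000000 in
lemma tagf_inj (t : ℕ) (i₁ i₂ : Fin (t + 1)) (hne : i₁ ≠ i₂) (σ₁ σ₂ : Equiv.Perm (Fin 3))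
    (j₀ : Fin 3) (hj₀ : j₀ ≠ 2) :
    Function.Injective (fun p : Fin (t + 2) × Fin 3 => tagf t i₁ i₂ σ₁ σ₂ j₀ p.1 p.2) := by
  have hσ₁ : σ₁ j₀ ≠ σ₁ 2 := fun h => hj₀ (σ₁.injective h)
  have h3 : ∀ x : Fin 3, x ≠ 0 → x ≠ 1 → x = 2 := by decide
  rintro ⟨k, j⟩ ⟨k', j'⟩ h
  simp only [tagf] at h
  by_cases hk : (k : ℕ) < t + 1 <;> by_cases hk' : (k' : ℕ) < t + 1 <;>
    simp only [hk, hk', dif_pos, dif_neg, not_false_iff, dite_true, dite_false] at h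
  · split_ifs at h <;>
      (simp only [Fin.ext_iff, Prod.ext_iff, Sum.inl.injEq, Sum.inr.injEq, reduceCtorEq] at *; simp_all) <;> omega
  · split_ifs at h <;> simp_all [Prod.ext_iff, Equiv.apply_eq_iff_eq]
  · split_ifs at h <;> simp_all [Prod.ext_iff, Equiv.apply_eq_iff_eq]
  · have hkk : k = k' := Fin.ext (by omega)
    subst hkk
    split_ifs at h <;> simp_all [Prod.ext_iff, Equiv.apply_eq_iff_eq]

set_option maxHeartbeats 2000000 in
lemma build_triangles {V : Type*} [DecidableEq V] {t : ℕ}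
    (G : SimpleGraph V)
    (f : Fin (t + 1) → Fin 3 → V)
    (hinj : Function.Injective fun p : Fin (t + 1) × Fin 3 => f p.1 p.2)
    (htri : ∀ i, G.Adj (f i 0) (f i 1) ∧ G.Adj (f i 1) (f i 2) ∧ G.Adj (f i 0) (f i 2))
    (Dset : Set V) (hDset : Dset = {x | ∀ i j, f i j ≠ x})
    (F : Finset (Sym2 V)) (hF : IsMatchingOn G Dset F)
    (i₁ i₂ : Fin (t + 1)) (hne : i₁ ≠ i₂)
    (σ₁ σ₂ : Equiv.Perm (Fin 3)) (j₀ : Fin 3) (hj₀ : j₀ ≠ 2)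
    (hfr₁ : ∃ e₁ ∈ F, ∃ e₂ ∈ F, e₁ ≠ e₂ ∧ Friendly G (f i₁ (σ₁ 2)) e₁ ∧ Friendly G (f i₁ (σ₁ 2)) e₂)
    (hfr₂ : ∃ e₁ ∈ F, ∃ e₂ ∈ F, e₁ ≠ e₂ ∧ Friendly G (f i₂ (σ₂ 2)) e₁ ∧ Friendly G (f i₂ (σ₂ 2)) e₂)
    (hadj1 : G.Adj (f i₁ (σ₁ j₀)) (f i₂ (σ₂ 0)))
    (hadj2 : G.Adj (f i₁ (σ₁ j₀)) (f i₂ (σ₂ 1))) :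
    HasIndepTriangles G (t + 2) := by
  classical
  have hD : ∀ v ∈ Dset, ∀ (i : Fin (t+1)) (j : Fin 3), f i j ≠ v := by
    intro v hv; rw [hDset] at hv; exact hv
  obtain ⟨hFmem, hFdisj⟩ := hF
  obtain ⟨e₁, he₁, e₂, he₂, h12, hf1, hf2⟩ := hfr₁
  obtain ⟨e₁', he₁', e₂', he₂', h12', hf1', hf2'⟩ := hfr₂
  obtain ⟨e, he, hfe, e', he', hfe', hee'⟩ :
      ∃ e ∈ F, Friendly G (f i₁ (σ₁ 2)) e ∧ ∃ e' ∈ F, Friendly G (f i₂ (σ₂ 2)) e' ∧ e ≠ e' := by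
    by_cases h : e₁ = e₁'
    · exact ⟨e₂, he₂, hf2, e₁', he₁', hf1', fun hh => h12 (hh.trans h.symm).symm⟩
    · exact ⟨e₁, he₁, hf1, e₁', he₁', hf1', h⟩
  induction e using Sym2.ind with | _ a b => ?_
  induction e' using Sym2.ind with | _ c d => ?_
  have hab : G.Adj a b := G.mem_edgeSet.mp (hFmem _ he).1
  have hcd : G.Adj c d := G.mem_edgeSet.mp (hFmem _ he').1
  have ha : a ∈ Dset := (hFmem _ he).2 a (by simp)
  have hb : b ∈ Dset := (hFmem _ he).2 b (by simp)
  have hc : c ∈ Dset := (hFmem _ he').2 c (by simp)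
  have hd : d ∈ Dset := (hFmem _ he').2 d (by simp)
  have hdisj : ∀ v ∈ (s(a,b) : Sym2 V), v ∉ (s(c,d) : Sym2 V) :=
    hFdisj (Finset.mem_coe.mpr he) (Finset.mem_coe.mpr he') hee'
  have hz₁a : G.Adj (f i₁ (σ₁ 2)) a := hfe a (by simp)
  have hz₁b : G.Adj (f i₁ (σ₁ 2)) b := hfe b (by simp)
  have hz₂c : G.Adj (f i₂ (σ₂ 2)) c := hfe' c (by simp)
  have hz₂d : G.Adj (f i₂ (σ₂ 2)) d := hfe' d (by simp)
  have hac : a ≠ c := fun h => hdisj a (by simp) (by simp [h])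
  have had : a ≠ d := fun h => hdisj a (by simp) (by simp [h])
  have hbc : b ≠ c := fun h => hdisj b (by simp) (by simp [h])
  have hbd : b ≠ d := fun h => hdisj b (by simp) (by simp [h])
  set val : (Fin (t+1) × Fin 3) ⊕ Fin 4 → V := Sum.elim (fun p => f p.1 p.2) ![a, b, c, d]
    with hval
  have hvalinj : Function.Injective val := by
    rintro (p | m) (q | n) h <;> simp only [hval, Sum.elim_inl, Sum.elim_inr] at h
    · exact congrArg Sum.inl (hinj h)
    · exfalso
      have hmem : ![a,b,c,d] n ∈ Dset := by fin_cases n <;> simpa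
      exact hD _ hmem p.1 p.2 h
    · exfalso
      have hmem : ![a,b,c,d] m ∈ Dset := by fin_cases m <;> simpa
      exact hD _ hmem q.1 q.2 h.symm
    · exact congrArg Sum.inr (vec4_inj hab.ne hac had hbc hbd hcd.ne h)
  refine ⟨fun k j => val (tagf t i₁ i₂ σ₁ σ₂ j₀ k j),
    hvalinj.comp (tagf_inj t i₁ i₂ hne σ₁ σ₂ j₀ hj₀), ?_⟩
  intro k
  by_cases hk : (k : ℕ) < t + 1
  · by_cases h1 : (⟨k, hk⟩ : Fin (t+1)) = i₁
    · simp only [tagf, hk, dif_pos, h1, if_pos, hval]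
      norm_num
      exact ⟨hz₁a, hab, hz₁b⟩
    · by_cases h2 : (⟨k, hk⟩ : Fin (t+1)) = i₂
      · have hi21 : (i₂ = i₁) = False := by simp [Ne.symm hne]
        simp only [tagf, hk, dif_pos, h2, hi21, if_false, if_pos, hval]
        norm_num
        exact ⟨hz₂c, hcd, hz₂d⟩
      · simp only [tagf, hk, dif_pos, h1, h2, if_neg, hval]
        norm_num
        exact htri _
  · simp only [tagf, hk, dif_neg, not_false_iff, hval]
    norm_num
    exact ⟨hadj1, slot_adj G f htri i₂ (by simp), hadj2⟩

/-- If `(x₁,y₁,z₁)` and `(x₂,y₂,z₂)` are distinct triangles of `M` whose vertices `z₁`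
and `z₂` are each friendly with at least two distinct edges of the matching `F` in `D`,
then neither `x₁` nor `y₁` is adjacent to both `x₂` and `y₂`. -/
theorem no_adjacency_between_A_triangles {V : Type*} [Fintype V] [DecidableEq V] (t : ℕ)
    (G : SimpleGraph V) (hG : ¬ HasIndepTriangles G (t + 2))
    (f : Fin (t + 1) → Fin 3 → V)
    (hinj : Function.Injective fun p : Fin (t + 1) × Fin 3 => f p.1 p.2)
    (htri : ∀ i, G.Adj (f i 0) (f i 1) ∧ G.Adj (f i 1) (f i 2) ∧ G.Adj (f i 0) (f i 2))
    (Dset : Set V) (hDset : Dset = {x | ∀ i j, f i j ≠ x})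
    (F : Finset (Sym2 V)) (hF : IsMatchingOn G Dset F)
    (x₁ y₁ z₁ x₂ y₂ z₂ : V) (i₁ i₂ : Fin (t + 1)) (hne : i₁ ≠ i₂)
    (σ₁ σ₂ : Equiv.Perm (Fin 3))
    (hx₁ : x₁ = f i₁ (σ₁ 0)) (hy₁ : y₁ = f i₁ (σ₁ 1)) (hz₁ : z₁ = f i₁ (σ₁ 2))
    (hx₂ : x₂ = f i₂ (σ₂ 0)) (hy₂ : y₂ = f i₂ (σ₂ 1)) (hz₂ : z₂ = f i₂ (σ₂ 2))
    (hfr₁ : ∃ e₁ ∈ F, ∃ e₂ ∈ F, e₁ ≠ e₂ ∧ Friendly G z₁ e₁ ∧ Friendly G z₁ e₂)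
    (hfr₂ : ∃ e₁ ∈ F, ∃ e₂ ∈ F, e₁ ≠ e₂ ∧ Friendly G z₂ e₁ ∧ Friendly G z₂ e₂) :
    ¬ (G.Adj x₁ x₂ ∧ G.Adj x₁ y₂) ∧ ¬ (G.Adj y₁ x₂ ∧ G.Adj y₁ y₂) := by
  subst hx₁ hy₁ hz₁ hx₂ hy₂ hz₂
  constructor
  · rintro ⟨h1, h2⟩
    exact hG (build_triangles G f hinj htri Dset hDset F hF i₁ i₂ hne σ₁ σ₂ 0 (by decide)
      hfr₁ hfr₂ h1 h2)
  · rintro ⟨h1, h2⟩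
    exact hG (build_triangles G f hinj htri Dset hDset F hF i₁ i₂ hne σ₁ σ₂ 1 (by decide)
      hfr₁ hfr₂ h1 h2)
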